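/- Let α and V be finite types, δ : V → α → Option V a partial transition function, 𝔰 ∈ V a start state, and K, m natural numbers. Suppose that for every word w : List α with w.length ≥ K and reach 𝔰 w = some t, the out-degree of t is at least m. Then for every L ≥ K, the number of words of length L accepted from 𝔰 is at least (the number of words of length K accepted from 𝔰) · m^(L−K). -/

import Mathlib

/-- The run map of a deterministic partial automaton. -/
def reach {V α : Type*} (δ : V → α → Option V) : V → List α → Option V
  | v, [] => some v
  | v, x :: w => (δ v x).bind fun u => reach δ u w

/-- The out-degree of a state `v`: the number of letters on which a transition
from `v` is defined. -/
noncomputable def outDeg {V α : Type*} [Fintype α] (δ : V → α → Option V) (v : V) : ℕ :=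
  open Classical in (Finset.univ.filter fun x : α => δ v x ≠ none).card

/-- The number of words of length `L` accepted from the state `v`
(words of length `L` identified with functions `Fin L → α`). -/
noncomputable def acceptedCount {V α : Type*} [Fintype α] (δ : V → α → Option V)
    (v : V) (L : ℕ) : ℕ :=
  open Classical in
  (Finset.univ.filter fun f : Fin L → α => reach δ v (List.ofFn f) ≠ none).card

lemma reach_append {V α : Type*} (δ : V → α → Option V) (v : V) (w₁ w₂ : List α) :
    reach δ v (w₁ ++ w₂) = (reach δ v w₁).bind fun u => reach δ u w₂ := by
  induction w₁ generalizing v with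
  | nil => simp [reach]
  | cons x w ih =>
    simp only [List.cons_append, reach]
    cases δ v x with
    | none => simp
    | some u => simp [ih]

lemma step_lemma {α V : Type*} [Fintype α] [Fintype V]
    (δ : V → α → Option V) (𝔰 : V) (K m : ℕ)
    (h : ∀ w : List α, K ≤ w.length → ∀ t : V, reach δ 𝔰 w = some t →
      m ≤ outDeg δ t)
    (L : ℕ) (hL : K ≤ L) :
    acceptedCount δ 𝔰 L * m ≤ acceptedCount δ 𝔰 (L + 1) := by
  classical
  unfold acceptedCount
  set S := (Finset.univ.filter fun f : Fin L → α => reach δ 𝔰 (List.ofFn f) ≠ none) with hS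
  set T := (Finset.univ.filter fun f : Fin (L+1) → α => reach δ 𝔰 (List.ofFn f) ≠ none) with hT
  have hofn : ∀ (a : Fin L → α) (x : α),
      List.ofFn (Fin.snoc a x : Fin (L+1) → α) = List.ofFn a ++ [x] := by
    intro a x
    rw [List.ofFn_succ']
    simp [Fin.snoc_castSucc, List.concat_eq_append]
  have hmap : ∀ f ∈ T, (fun i : Fin L => f i.castSucc) ∈ S := by
    intro f hf
    simp only [hT, Finset.mem_filter, Finset.mem_univ, true_and] at hf
    simp only [hS, Finset.mem_filter, Finset.mem_univ, true_and]
    intro hnone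
    apply hf
    have : List.ofFn f = List.ofFn (fun i : Fin L => f i.castSucc) ++ [f (Fin.last L)] := by
      rw [List.ofFn_succ']; simp [List.concat_eq_append]
    rw [this, reach_append, hnone]
    rfl
  rw [Finset.card_eq_sum_card_fiberwise hmap]
  have : S.card * m = ∑ _a ∈ S, m := by simp [mul_comm]
  rw [this]
  apply Finset.sum_le_sum
  intro a ha
  simp only [hS, Finset.mem_filter, Finset.mem_univ, true_and] at ha
  obtain ⟨t, ht⟩ := Option.ne_none_iff_exists'.mp ha
  have hm : m ≤ outDeg δ t := h (List.ofFn a) (by simp [hL]) t ht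
  refine le_trans hm ?_
  unfold outDeg
  apply Finset.card_le_card_of_injOn (fun x : α => (Fin.snoc a x : Fin (L+1) → α))
  · intro x hx
    simp only [Finset.mem_coe, Finset.mem_filter, Finset.mem_univ, true_and] at hx
    refine Finset.mem_filter.mpr ⟨?_, ?_⟩
    · rw [hT]
      simp only [Finset.mem_filter, Finset.mem_univ, true_and]
      intro hnone
      apply hx
      rw [hofn, reach_append, ht] at hnone
      simpa [reach] using hnone
    · funext i
      simp [Fin.snoc_castSucc]
  · intro x _ y _ hxy
    have := congrArg (fun g => g (Fin.last L)) hxy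
    simpa using this

/-- if every state reached from `𝔰` by a word of length `≥ K` has
out-degree at least `m`, then for every `L ≥ K` the number of accepted words of
length `L` is at least the number of accepted words of length `K` times `m^(L−K)`. -/
theorem stmt6 {α V : Type*} [Fintype α] [Fintype V]
    (δ : V → α → Option V) (𝔰 : V) (K m : ℕ)
    (h : ∀ w : List α, K ≤ w.length → ∀ t : V, reach δ 𝔰 w = some t →
      m ≤ outDeg δ t)
    (L : ℕ) (hL : K ≤ L) :
    acceptedCount δ 𝔰 K * m ^ (L - K) ≤ acceptedCount δ 𝔰 L := by
  induction L with
  | zero =>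
    have : K = 0 := Nat.le_zero.mp hL
    subst this
    simp
  | succ n ih =>
    rcases Nat.lt_or_ge K (n + 1) with hlt | hge
    · have hKn : K ≤ n := Nat.lt_succ_iff.mp hlt
      have h1 := ih hKn
      have h2 := step_lemma δ 𝔰 K m h n hKn
      calc acceptedCount δ 𝔰 K * m ^ (n + 1 - K)
          = acceptedCount δ 𝔰 K * m ^ (n - K) * m := by
            rw [Nat.succ_sub hKn, pow_succ, mul_assoc]
        _ ≤ acceptedCount δ 𝔰 n * m := Nat.mul_le_mul_right m h1
        _ ≤ acceptedCount δ 𝔰 (n + 1) := h2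
    · have : K = n + 1 := le_antisymm hL hge
      subst this
      simp
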